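/- Let n ≥ 7 and p > n/(n-6), and set m = 6/(p-1) and L = (m(m+2)(m+4)(n-2-m)(n-4-m)(n-6-m))^{1/(p-1)}. Then 0 < m < n-6, and the function u(x) = L|x|^{-m} satisfies (-Δ)³u = u^p on ℝⁿ \ {0}. -/

import Mathlib

/-- Radial Laplacian in `ℝⁿ`: `Δf(r) = f''(r) + ((n-1)/r) f'(r)`. -/
noncomputable def radialLaplacian (n : ℕ) (f : ℝ → ℝ) (r : ℝ) : ℝ :=
  deriv (deriv f) r + ((n : ℝ) - 1) / r * deriv f r

lemma radialLaplacian_congr {n : ℕ} {f g : ℝ → ℝ} {r : ℝ} (h : f =ᶠ[nhds r] g) :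
    radialLaplacian n f r = radialLaplacian n g r := by
  unfold radialLaplacian
  rw [h.deriv.deriv.eq_of_nhds, h.deriv.eq_of_nhds]

lemma deriv_cmul_rpow (c a : ℝ) {s : ℝ} (hs : 0 < s) :
    deriv (fun ρ : ℝ => c * ρ ^ a) s = c * a * s ^ (a - 1) := by
  have h := ((Real.hasDerivAt_rpow_const (p := a) (Or.inl hs.ne')).const_mul c).deriv
  rw [h]; ring

lemma neg_radial (n : ℕ) (c a : ℝ) {r : ℝ} (hr : 0 < r) :
    -radialLaplacian n (fun ρ : ℝ => c * ρ ^ a) r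
      = (c * (-a * (a + (n : ℝ) - 2))) * r ^ (a - 2) := by
  have hev : ∀ᶠ s in nhds r, 0 < s := eventually_gt_nhds hr
  have h1 : deriv (fun ρ : ℝ => c * ρ ^ a) =ᶠ[nhds r] fun ρ => (c * a) * ρ ^ (a - 1) :=
    hev.mono fun s hs => by rw [deriv_cmul_rpow c a hs]
  have h2 : deriv (deriv (fun ρ : ℝ => c * ρ ^ a)) r = (c * a) * (a - 1) * r ^ (a - 1 - 1) := by
    rw [h1.deriv_eq, deriv_cmul_rpow (c * a) (a - 1) hr]
  have h3 : deriv (fun ρ : ℝ => c * ρ ^ a) r = c * a * r ^ (a - 1) := deriv_cmul_rpow c a hr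
  have hsub : r ^ (a - 1) = r ^ (a - 2) * r := by
    rw [← Real.rpow_add_one hr.ne']; ring_nf
  unfold radialLaplacian
  rw [h2, h3]
  have : r ^ (a - 1 - 1) = r ^ (a - 2) := by congr 1; ring
  rw [this, hsub]
  field_simp
  ring

theorem stmt_1 (n : ℕ) (hn : 7 ≤ n) (p : ℝ) (hp : (n : ℝ) / ((n : ℝ) - 6) < p)
    (m L : ℝ) (hm : m = 6 / (p - 1))
    (hL : L = (m * (m + 2) * (m + 4) * ((n : ℝ) - 2 - m) * ((n : ℝ) - 4 - m) *
      ((n : ℝ) - 6 - m)) ^ (1 / (p - 1))) :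
    (0 < m ∧ m < (n : ℝ) - 6) ∧
    ∀ r : ℝ, 0 < r →
      -radialLaplacian n
        (fun s => -radialLaplacian n
          (fun t => -radialLaplacian n (fun ρ => L * ρ ^ (-m)) t) s) r
        = (L * r ^ (-m)) ^ p := by
  have hn7 : (7 : ℝ) ≤ (n : ℝ) := by exact_mod_cast hn
  have hn6 : (0 : ℝ) < (n : ℝ) - 6 := by linarith
  have hp1 : 1 < p := by
    have : (1 : ℝ) < (n : ℝ) / ((n : ℝ) - 6) := by
      rw [lt_div_iff₀ hn6]; linarith
    linarith
  have hp1' : 0 < p - 1 := by linarith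
  have hm0 : 0 < m := by rw [hm]; positivity
  have hmn : m < (n : ℝ) - 6 := by
    rw [hm, div_lt_iff₀ hp1']
    have := (div_lt_iff₀ hn6).mp hp
    nlinarith
  have hmp : m * p = m + 6 := by
    have : m * (p - 1) = 6 := by rw [hm]; field_simp
    nlinarith
  set K : ℝ := m * (m + 2) * (m + 4) * ((n : ℝ) - 2 - m) * ((n : ℝ) - 4 - m) *
      ((n : ℝ) - 6 - m) with hK
  have hK0 : 0 < K := by
    have h1 : 0 < (n : ℝ) - 6 - m := by linarith
    have h2 : 0 < (n : ℝ) - 4 - m := by linarith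
    have h3 : 0 < (n : ℝ) - 2 - m := by linarith
    positivity
  have hL0 : 0 < L := by rw [hL]; positivity
  refine ⟨⟨hm0, hmn⟩, fun r hr => ?_⟩
  -- inner laplacian
  have hev : ∀ᶠ s in nhds r, 0 < s := eventually_gt_nhds hr
  set c1 : ℝ := L * (m * (-m + (n : ℝ) - 2)) with hc1
  set c2 : ℝ := c1 * ((m + 2) * (-m - 2 + (n : ℝ) - 2)) with hc2
  set c3 : ℝ := c2 * ((m + 4) * (-m - 4 + (n : ℝ) - 2)) with hc3
  have step1 : ∀ t : ℝ, 0 < t →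
      -radialLaplacian n (fun ρ => L * ρ ^ (-m)) t = c1 * t ^ (-m - 2) := by
    intro t ht
    have := neg_radial n L (-m) ht
    simpa [hc1, mul_comm, mul_left_comm, mul_assoc] using this
  have step2 : ∀ s : ℝ, 0 < s →
      -radialLaplacian n (fun t => -radialLaplacian n (fun ρ => L * ρ ^ (-m)) t) s
        = c2 * s ^ (-m - 4) := by
    intro s hs
    have hcong : (fun t => -radialLaplacian n (fun ρ => L * ρ ^ (-m)) t)
        =ᶠ[nhds s] fun t => c1 * t ^ (-m - 2) :=
      (eventually_gt_nhds hs).mono fun t ht => step1 t ht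
    rw [radialLaplacian_congr hcong]
    have := neg_radial n c1 (-m - 2) hs
    rw [this, show (-m - 2 - 2 : ℝ) = -m - 4 from by ring, hc2]
    ring
  have step3 :
      -radialLaplacian n
        (fun s => -radialLaplacian n
          (fun t => -radialLaplacian n (fun ρ => L * ρ ^ (-m)) t) s) r
        = c3 * r ^ (-m - 6) := by
    have hcong : (fun s => -radialLaplacian n
          (fun t => -radialLaplacian n (fun ρ => L * ρ ^ (-m)) t) s)
        =ᶠ[nhds r] fun s => c2 * s ^ (-m - 4) :=
      hev.mono fun s hs => step2 s hs
    rw [radialLaplacian_congr hcong]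
    have := neg_radial n c2 (-m - 4) hr
    rw [this, show (-m - 4 - 2 : ℝ) = -m - 6 from by ring, hc3]
    ring
  rw [step3]
  -- RHS
  have hrm : (0 : ℝ) ≤ r ^ (-m) := (Real.rpow_pos_of_pos hr _).le
  have hLp : L ^ p = L * K := by
    rw [hL, ← Real.rpow_mul hK0.le]
    have he : 1 / (p - 1) * p = 1 / (p - 1) + 1 := by field_simp; ring
    rw [he, Real.rpow_add hK0, Real.rpow_one]
  rw [Real.mul_rpow hL0.le hrm, hLp, ← Real.rpow_mul hr.le]
  have hexp : -m * p = -m - 6 := by linarith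
  rw [hexp, hc3, hc2, hc1, hK]
  ring
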